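/- Let S ∈ {FT, T̄} and A, B ∈ M_n(S). Then A ≤_J B if and only if there exists a tropical convex set Y ⊆ S^n such that R_S(A) ⊆ Y and there is a surjective linear morphism from R_S(B) onto Y. -/

import Mathlib

section TropDefs

variable {S : Type*} [SemilatticeSup S] [Add S] {n : ℕ} [NeZero n]

/-- Tropical (max-plus) matrix multiplication. -/
def tropMul (X Y : Matrix (Fin n) (Fin n) S) : Matrix (Fin n) (Fin n) S :=
  fun i j => Finset.univ.sup' Finset.univ_nonempty fun k => X i k + Y k j

/-- Green's `J`-order: `A ≤_J B` iff `A ∈ M¹ B M¹`. -/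
def JleGen {M : Type*} (mul : M → M → M) (A B : M) : Prop :=
  A = B ∨ (∃ P, A = mul P B) ∨ (∃ Q, A = mul B Q) ∨ ∃ P Q, A = mul (mul P B) Q

/-- A tropical convex set: closed under componentwise max and tropical scaling. -/
def TropConvex (Y : Set (Fin n → S)) : Prop :=
  (∀ x ∈ Y, ∀ y ∈ Y, x ⊔ y ∈ Y) ∧ ∀ c : S, ∀ x ∈ Y, (fun j => c + x j) ∈ Y

/-- The (tropical) row space of `A`. -/
def tropRowSpan (A : Matrix (Fin n) (Fin n) S) : Set (Fin n → S) :=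
  {v | ∃ lam : Fin n → S,
    v = fun j => Finset.univ.sup' Finset.univ_nonempty fun i => lam i + A i j}

/-- There is a surjective linear morphism from `X` onto `Y`. -/
def SurjLin (X Y : Set (Fin n → S)) : Prop :=
  ∃ f : (Fin n → S) → (Fin n → S),
    (∀ x ∈ X, ∀ y ∈ X, f (x ⊔ y) = f x ⊔ f y) ∧
    (∀ c : S, ∀ x ∈ X, (f fun j => c + x j) = fun j => c + f x j) ∧
    (∀ x ∈ X, f x ∈ Y) ∧ ∀ y ∈ Y, ∃ x ∈ X, f x = y

/-- The statement, for a tropical semiring `S`:  `A ≤_J B` iff there is a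
tropical convex set `Y ⊆ S^n` with `R_S(A) ⊆ Y` and a linear surjection of
`R_S(B)` onto `Y`. -/
def JorderChar (S : Type*) [SemilatticeSup S] [Add S] (n : ℕ) [NeZero n] : Prop :=
  ∀ A B : Matrix (Fin n) (Fin n) S,
    JleGen tropMul A B ↔
      ∃ Y : Set (Fin n → S), TropConvex Y ∧ tropRowSpan A ⊆ Y ∧
        SurjLin (tropRowSpan B) Y

end TropDefs

namespace Stmt11Aux

open Finset

variable {S : Type*} {n : ℕ} [NeZero n]

section Gen

variable [LinearOrder S] [AddCommMonoid S]
  [CovariantClass S S (· + ·) (· ≤ ·)]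
  [CovariantClass S S (Function.swap (· + ·)) (· ≤ ·)]

/-- tropical row-vector–matrix product -/
def vmul (lam : Fin n → S) (M : Matrix (Fin n) (Fin n) S) : Fin n → S :=
  fun j => Finset.univ.sup' Finset.univ_nonempty fun m => lam m + M m j

lemma mem_rowSpan_iff {v : Fin n → S} {M : Matrix (Fin n) (Fin n) S} :
    v ∈ tropRowSpan M ↔ ∃ lam : Fin n → S, v = vmul lam M := Iff.rfl

lemma add_sup'_left (c : S) (g : Fin n → S) :
    c + Finset.univ.sup' Finset.univ_nonempty g
      = Finset.univ.sup' Finset.univ_nonempty fun m => c + g m := by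
  exact Finset.comp_sup'_eq_sup'_comp _ (fun x => c + x)
    (fun x y => (Monotone.map_sup (fun a b h => add_le_add_right h c) x y))

lemma add_sup'_right (c : S) (g : Fin n → S) :
    Finset.univ.sup' Finset.univ_nonempty g + c
      = Finset.univ.sup' Finset.univ_nonempty fun m => g m + c := by
  exact Finset.comp_sup'_eq_sup'_comp _ (fun x => x + c)
    (fun x y => (Monotone.map_sup (fun a b h => add_le_add_left h c) x y))

lemma sup'_sup (f g : Fin n → S) :
    (Finset.univ.sup' Finset.univ_nonempty fun m => f m ⊔ g m)
      = (Finset.univ.sup' Finset.univ_nonempty f)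
        ⊔ (Finset.univ.sup' Finset.univ_nonempty g) := by
  apply le_antisymm
  · exact Finset.sup'_le _ _ fun m _ =>
      sup_le ((Finset.le_sup' f (mem_univ m)).trans le_sup_left)
        ((Finset.le_sup' g (mem_univ m)).trans le_sup_right)
  · refine sup_le (Finset.sup'_le _ _ fun m _ => ?_) (Finset.sup'_le _ _ fun m _ => ?_)
    · exact le_trans le_sup_left (Finset.le_sup' (fun m => f m ⊔ g m) (mem_univ m))
    · exact le_trans le_sup_right (Finset.le_sup' (fun m => f m ⊔ g m) (mem_univ m))

lemma vmul_sup (lam mu : Fin n → S) (M : Matrix (Fin n) (Fin n) S) :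
    vmul (lam ⊔ mu) M = vmul lam M ⊔ vmul mu M := by
  funext j
  show (Finset.univ.sup' Finset.univ_nonempty fun m => (lam m ⊔ mu m) + M m j) = _
  have : ∀ m, (lam m ⊔ mu m) + M m j = (lam m + M m j) ⊔ (mu m + M m j) := fun m =>
    Monotone.map_sup (fun a b h => add_le_add_left h (M m j)) _ _
  simp only [this]
  rw [sup'_sup]
  rfl

lemma vmul_smul (c : S) (lam : Fin n → S) (M : Matrix (Fin n) (Fin n) S) :
    vmul (fun m => c + lam m) M = fun j => c + vmul lam M j := by
  funext j
  show (Finset.univ.sup' Finset.univ_nonempty fun m => (c + lam m) + M m j) = _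
  rw [vmul, add_sup'_left]
  simp only [add_assoc]

lemma row_tropMul (P B : Matrix (Fin n) (Fin n) S) (i : Fin n) :
    (tropMul P B) i = vmul (P i) B := rfl

lemma vmul_assoc (lam : Fin n → S) (B Q : Matrix (Fin n) (Fin n) S) :
    vmul lam (tropMul B Q) = vmul (vmul lam B) Q := by
  funext j
  show (Finset.univ.sup' Finset.univ_nonempty fun m =>
      lam m + Finset.univ.sup' Finset.univ_nonempty fun k => B m k + Q k j) = _
  have h1 : ∀ m : Fin n, lam m + (Finset.univ.sup' Finset.univ_nonempty fun k => B m k + Q k j)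
      = Finset.univ.sup' Finset.univ_nonempty fun k => lam m + B m k + Q k j := by
    intro m
    rw [add_sup'_left]
    simp only [add_assoc]
  have h2 : ∀ k : Fin n,
      (Finset.univ.sup' Finset.univ_nonempty fun m => lam m + B m k) + Q k j
      = Finset.univ.sup' Finset.univ_nonempty fun m => lam m + B m k + Q k j := by
    intro k
    rw [add_sup'_right]
  simp only [h1]
  show _ = Finset.univ.sup' Finset.univ_nonempty fun k =>
      (Finset.univ.sup' Finset.univ_nonempty fun m => lam m + B m k) + Q k j
  simp only [h2]
  exact Finset.sup'_comm Finset.univ_nonempty Finset.univ_nonempty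
    (fun m k => lam m + B m k + Q k j)

lemma tropConvex_rowSpan (M : Matrix (Fin n) (Fin n) S) : TropConvex (tropRowSpan M) := by
  constructor
  · rintro x ⟨lam, rfl⟩ y ⟨mu, rfl⟩
    exact ⟨lam ⊔ mu, (vmul_sup lam mu M).symm⟩
  · rintro c x ⟨lam, rfl⟩
    exact ⟨fun m => c + lam m, (vmul_smul c lam M).symm⟩

lemma surjLin_id (X : Set (Fin n → S)) : SurjLin X X :=
  ⟨id, fun _ _ _ _ => rfl, fun _ _ _ => rfl, fun _ hx => hx, fun y hy => ⟨y, hy, rfl⟩⟩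

/-- Forward direction of the characterisation. -/
lemma forward (A B : Matrix (Fin n) (Fin n) S) (h : JleGen tropMul A B) :
    ∃ Y : Set (Fin n → S), TropConvex Y ∧ tropRowSpan A ⊆ Y ∧
      SurjLin (tropRowSpan B) Y := by
  have surjQ : ∀ Q : Matrix (Fin n) (Fin n) S,
      SurjLin (tropRowSpan B) (tropRowSpan (tropMul B Q)) := by
    intro Q
    refine ⟨fun v => vmul v Q, ?_, ?_, ?_, ?_⟩
    · intro x _ y _
      exact vmul_sup x y Q
    · intro c x _
      exact vmul_smul c x Q
    · rintro x ⟨lam, rfl⟩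
      exact ⟨lam, (vmul_assoc lam B Q).symm⟩
    · rintro y ⟨lam, rfl⟩
      exact ⟨vmul lam B, ⟨lam, rfl⟩, (vmul_assoc lam B Q).symm⟩
  rcases h with h | ⟨P, rfl⟩ | ⟨Q, rfl⟩ | ⟨P, Q, rfl⟩
  · rw [h]
    exact ⟨tropRowSpan B, tropConvex_rowSpan B, le_refl _, surjLin_id _⟩
  · refine ⟨tropRowSpan B, tropConvex_rowSpan B, ?_, surjLin_id _⟩
    rintro v ⟨lam, rfl⟩
    refine ⟨vmul lam P, ?_⟩
    exact vmul_assoc lam P B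
  · exact ⟨tropRowSpan (tropMul B Q), tropConvex_rowSpan _, le_refl _, surjQ Q⟩
  · refine ⟨tropRowSpan (tropMul B Q), tropConvex_rowSpan _, ?_, surjQ Q⟩
    rintro v ⟨lam, rfl⟩
    refine ⟨vmul lam P, ?_⟩
    show vmul lam (tropMul (tropMul P B) Q) = vmul (vmul lam P) (tropMul B Q)
    rw [vmul_assoc lam (tropMul P B) Q, vmul_assoc lam P B, vmul_assoc (vmul lam P) B Q]

section Sub

variable (sub' : S → S → S)

/-- The coefficients expressing row `i` of `M` as a combination of the rows of `M`. -/
def lamRow (M : Matrix (Fin n) (Fin n) S) (i : Fin n) : Fin n → S :=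
  fun m => Finset.univ.inf' Finset.univ_nonempty fun p => sub' (M i p) (M m p)

variable (hsub : ∀ z x y : S, z + y ≤ x ↔ z ≤ sub' x y)

include hsub

lemma zero_le_lamRow_self (M : Matrix (Fin n) (Fin n) S) (i : Fin n) :
    (0 : S) ≤ lamRow sub' M i i :=
  Finset.le_inf' _ _ fun p _ => (hsub 0 _ _).1 (by rw [zero_add])

lemma vmul_lamRow (M : Matrix (Fin n) (Fin n) S) (i : Fin n) :
    vmul (lamRow sub' M i) M = M i := by
  funext j
  apply le_antisymm
  · refine Finset.sup'_le _ _ fun m _ => ?_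
    exact (hsub _ _ _).2 (Finset.inf'_le _ (mem_univ j))
  · calc M i j = 0 + M i j := (zero_add _).symm
      _ ≤ lamRow sub' M i i + M i j :=
          add_le_add_left (zero_le_lamRow_self sub' hsub M i) _
      _ ≤ _ := Finset.le_sup' (fun m => lamRow sub' M i m + M m j) (mem_univ i)

omit hsub

/-- The per-semiring key combinatorial lemma. -/
def KL : Prop :=
  ∀ (C A : Matrix (Fin n) (Fin n) S) (i j : Fin n),
    (∀ k, C i k + (Finset.univ.inf' Finset.univ_nonempty
        fun m => sub' (A m j) (C m k)) < A i j) →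
    ∃ nu : Fin n → S, (∀ p, C i p ≤ vmul nu C p) ∧ vmul nu A j < A i j

include hsub

/-- Key duality lemma: if the row-combination order of `C` refines that of `A`,
then `A` factors as `C ⊙ Q`. -/
lemma key (hkl : KL (n := n) sub') (C A : Matrix (Fin n) (Fin n) S)
    (H : ∀ lam mu : Fin n → S,
      (∀ j, vmul lam C j ≤ vmul mu C j) → ∀ j, vmul lam A j ≤ vmul mu A j) :
    ∃ Q, A = tropMul C Q := by
  set Q : Matrix (Fin n) (Fin n) S := fun k j =>
    Finset.univ.inf' Finset.univ_nonempty fun m => sub' (A m j) (C m k) with hQ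
  refine ⟨Q, ?_⟩
  funext i j
  apply le_antisymm
  · by_contra hcon
    rw [not_le] at hcon
    have hyp : ∀ k, C i k + Q k j < A i j := fun k =>
      lt_of_le_of_lt (Finset.le_sup' (fun k => C i k + Q k j) (mem_univ k)) hcon
    obtain ⟨nu, h1, h2⟩ := hkl C A i j hyp
    have h3 : ∀ j', vmul (lamRow sub' C i) A j' ≤ vmul nu A j' := by
      refine H _ _ fun p => ?_
      rw [vmul_lamRow sub' hsub]
      exact h1 p
    have h4 : A i j ≤ vmul (lamRow sub' C i) A j := by
      calc A i j = 0 + A i j := (zero_add _).symm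
        _ ≤ lamRow sub' C i i + A i j :=
            add_le_add_left (zero_le_lamRow_self sub' hsub C i) _
        _ ≤ _ := Finset.le_sup' (fun m => lamRow sub' C i m + A m j) (mem_univ i)
    exact absurd ((h4.trans (h3 j)).trans_lt h2) (lt_irrefl _)
  · refine Finset.sup'_le _ _ fun k _ => ?_
    rw [add_comm]
    exact (hsub _ _ _).2 (Finset.inf'_le _ (mem_univ i))

/-- Backward direction of the characterisation. -/
lemma backward (hkl : KL (n := n) sub') (A B : Matrix (Fin n) (Fin n) S)
    (h : ∃ Y : Set (Fin n → S), TropConvex Y ∧ tropRowSpan A ⊆ Y ∧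
      SurjLin (tropRowSpan B) Y) : JleGen tropMul A B := by
  obtain ⟨Y, _, hAY, f, hfsup, hfsmul, _, hsurj⟩ := h
  have hrow : ∀ i, (A i) ∈ tropRowSpan A := fun i =>
    ⟨lamRow sub' A i, (vmul_lamRow sub' hsub A i).symm⟩
  have hx : ∀ i : Fin n, ∃ lam : Fin n → S, f (vmul lam B) = A i := by
    intro i
    obtain ⟨x, hxB, hfx⟩ := hsurj (A i) (hAY (hrow i))
    obtain ⟨lam, rfl⟩ := hxB
    exact ⟨lam, hfx⟩
  choose P hP using hx
  set C : Matrix (Fin n) (Fin n) S := tropMul (fun i k => P i k) B with hC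
  have hCrow : ∀ m, C m = vmul (P m) B := fun m => rfl
  -- `f` sends combinations of rows of `C` to the corresponding combos of rows of `A`
  have hmem : ∀ (lam : Fin n → S) (s : Finset (Fin n)) (hs : s.Nonempty),
      (s.sup' hs fun m => fun j => lam m + C m j) ∈ tropRowSpan B ∧
      f (s.sup' hs fun m => fun j => lam m + C m j)
        = s.sup' hs fun m => fun j => lam m + A m j := by
    intro lam s hs
    induction hs using Finset.Nonempty.cons_induction with
    | singleton a =>
      simp only [Finset.sup'_singleton]
      constructor
      · refine ⟨fun k => lam a + P a k, ?_⟩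
        show (fun j => lam a + C a j) = vmul (fun k => lam a + P a k) B
        rw [vmul_smul]
        rfl
      · have := hfsmul (lam a) (vmul (P a) B) ⟨P a, rfl⟩
        rw [hCrow a, this, hP a]
    | cons a s ha hs ih =>
      rw [Finset.sup'_cons hs, Finset.sup'_cons hs]
      have hmem1 : (fun j => lam a + C a j) ∈ tropRowSpan B := by
        refine ⟨fun k => lam a + P a k, ?_⟩
        show (fun j => lam a + C a j) = vmul (fun k => lam a + P a k) B
        rw [vmul_smul]
        rfl
      have hmemS := ih.1
      constructor
      · exact (tropConvex_rowSpan B).1 _ hmem1 _ hmemS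
      · rw [hfsup _ hmem1 _ hmemS, ih.2]
        congr 1
        have := hfsmul (lam a) (vmul (P a) B) ⟨P a, rfl⟩
        rw [hCrow a, this, hP a]
  have hvC : ∀ lam : Fin n → S,
      vmul lam C = Finset.univ.sup' Finset.univ_nonempty fun m => fun j => lam m + C m j := by
    intro lam
    funext j
    rw [Finset.sup'_apply]
    rfl
  have hvA : ∀ lam : Fin n → S,
      vmul lam A = Finset.univ.sup' Finset.univ_nonempty fun m => fun j => lam m + A m j := by
    intro lam
    funext j
    rw [Finset.sup'_apply]
    rfl
  have hf : ∀ lam : Fin n → S, f (vmul lam C) = vmul lam A := by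
    intro lam
    rw [hvC, hvA]
    exact (hmem lam Finset.univ Finset.univ_nonempty).2
  have H : ∀ lam mu : Fin n → S,
      (∀ j, vmul lam C j ≤ vmul mu C j) → ∀ j, vmul lam A j ≤ vmul mu A j := by
    intro lam mu hle j
    have hle' : vmul lam C ≤ vmul mu C := hle
    have h1 : vmul (lam ⊔ mu) C = vmul mu C := by
      rw [vmul_sup, sup_eq_right.mpr hle']
    have h2 : vmul mu A = vmul lam A ⊔ vmul mu A := by
      rw [← vmul_sup, ← hf mu, ← h1, hf]
    calc vmul lam A j ≤ (vmul lam A ⊔ vmul mu A) j := le_sup_left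
      _ = vmul mu A j := by rw [← h2]
  obtain ⟨Q, hQ⟩ := key sub' hsub hkl C A H
  exact Or.inr (Or.inr (Or.inr ⟨fun i k => P i k, Q, hQ⟩))

lemma jorderChar (hkl : KL (n := n) sub') : JorderChar S n := fun A B =>
  ⟨forward A B, backward sub' hsub hkl A B⟩

end Sub

end Gen

section RealCase

lemma hsub_real : ∀ z x y : ℝ, z + y ≤ x ↔ z ≤ x - y := fun _ _ _ =>
  (le_sub_iff_add_le).symm

lemma kl_real : KL (n := n) (fun x y : ℝ => x - y) := by
  intro C A i j hyp
  set Qf : Fin n → ℝ := fun k =>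
    Finset.univ.inf' Finset.univ_nonempty fun m => A m j - C m k with hQf
  set e : ℝ := Finset.univ.inf' Finset.univ_nonempty fun k => A i j - C i k - Qf k with he
  have hepos : 0 < e := by
    rw [he, Finset.lt_inf'_iff]
    intro k _
    have := hyp k
    linarith
  refine ⟨fun m => A i j - A m j - e, ?_, ?_⟩
  · intro p
    obtain ⟨m, _, hm⟩ := Finset.exists_mem_eq_inf' Finset.univ_nonempty
      (fun m => A m j - C m p)
    have h1 : e ≤ A i j - C i p - Qf p := Finset.inf'_le _ (mem_univ p)
    have h2 : Qf p = A m j - C m p := hm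
    have h3 : C i p ≤ A i j - A m j - e + C m p := by
      rw [h2] at h1; linarith
    show C i p ≤ Finset.univ.sup' Finset.univ_nonempty
      fun m' => (A i j - A m' j - e) + C m' p
    exact le_trans h3 (Finset.le_sup' (fun m' => (A i j - A m' j - e) + C m' p) (mem_univ m))
  · rw [vmul, Finset.sup'_lt_iff]
    intro m _
    have : A i j - A m j - e + A m j = A i j - e := by ring
    rw [this]
    linarith

end RealCase

section ERealCase

/-- Residuated subtraction on `EReal`: the largest `z` with `z + y ≤ x`. -/
noncomputable def esub (x y : EReal) : EReal :=
  if y = ⊥ then ⊤ else if x = ⊤ then ⊤ else x - y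

lemma etricho (x : EReal) : x = ⊥ ∨ x = ⊤ ∨ ∃ r : ℝ, x = (r : EReal) := by
  induction x with
  | bot => exact Or.inl rfl
  | coe r => exact Or.inr (Or.inr ⟨r, rfl⟩)
  | top => exact Or.inr (Or.inl rfl)

lemma esub_galois : ∀ z x y : EReal, z + y ≤ x ↔ z ≤ esub x y := by
  intro z x y
  unfold esub
  split_ifs with hy hx
  · subst hy
    simp
  · subst hx
    simp
  · exact (EReal.le_sub_iff_add_le (Or.inl hy) (Or.inr hx)).symm

lemma esub_bot_right (x : EReal) : esub x ⊥ = ⊤ := if_pos rfl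

lemma esub_coe_coe (b c : ℝ) : esub (b : EReal) (c : EReal) = ((b - c : ℝ) : EReal) := by
  unfold esub
  rw [if_neg (EReal.coe_ne_bot c), if_neg (EReal.coe_ne_top b)]
  exact (EReal.coe_sub b c).symm

lemma esub_ne_top {x y : EReal} (h : esub x y ≠ ⊤) : y ≠ ⊥ ∧ x ≠ ⊤ := by
  unfold esub at h
  split_ifs at h with h1 h2
  · exact absurd rfl h
  · exact absurd rfl h
  · exact ⟨h1, h2⟩

lemma esub_eq_bot {x y : EReal} (h : esub x y = ⊥) :
    y ≠ ⊥ ∧ x ≠ ⊤ ∧ (x = ⊥ ∨ y = ⊤) := by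
  unfold esub at h
  split_ifs at h with h1 h2
  · exact absurd h top_ne_bot
  · exact absurd h top_ne_bot
  refine ⟨h1, h2, ?_⟩
  rw [sub_eq_add_neg, EReal.add_eq_bot_iff] at h
  rcases h with h | h
  · exact Or.inl h
  · exact Or.inr (EReal.neg_eq_bot_iff.1 h)

lemma esub_eq_coe {x y : EReal} {q : ℝ} (h : esub x y = (q : EReal)) :
    ∃ b c : ℝ, x = (b : EReal) ∧ y = (c : EReal) ∧ q = b - c := by
  unfold esub at h
  split_ifs at h with h1 h2
  · exact absurd h.symm (EReal.coe_ne_top q)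
  · exact absurd h.symm (EReal.coe_ne_top q)
  · rcases etricho x with rfl | rfl | ⟨b, rfl⟩
    · rcases etricho y with rfl | rfl | ⟨c, rfl⟩
      · exact absurd rfl h1
      · rw [EReal.sub_top] at h
        exact absurd h.symm (EReal.coe_ne_bot q)
      · rw [show (⊥ : EReal) - (c : EReal) = ⊥ from rfl] at h
        exact absurd h.symm (EReal.coe_ne_bot q)
    · exact absurd rfl h2
    · rcases etricho y with rfl | rfl | ⟨c, rfl⟩
      · exact absurd rfl h1
      · rw [EReal.sub_top] at h
        exact absurd h.symm (EReal.coe_ne_bot q)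
      · refine ⟨b, c, rfl, rfl, ?_⟩
        rw [← EReal.coe_sub] at h
        exact (EReal.coe_eq_coe_iff.1 h).symm

lemma kl_ereal : KL (n := n) esub := by
  intro C A i j hyp
  set Qf : Fin n → EReal := fun k =>
    Finset.univ.inf' Finset.univ_nonempty fun m => esub (A m j) (C m k) with hQf
  have hyp' : ∀ k, C i k + Qf k < A i j := hyp
  have hch : ∀ k : Fin n, ∃ m : Fin n, Qf k = esub (A m j) (C m k) := by
    intro k
    obtain ⟨m, _, hm⟩ := Finset.exists_mem_eq_inf' Finset.univ_nonempty
      (fun m => esub (A m j) (C m k))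
    exact ⟨m, hm⟩
  choose mw hmw using hch
  rcases etricho (A i j) with hA | hA | ⟨a, hA⟩
  · exfalso
    have k0 : Fin n := Classical.arbitrary _
    have := hyp' k0
    rw [hA] at this
    exact not_lt_bot this
  · -- Case `A i j = ⊤`
    set r : ℝ := Finset.univ.sup' Finset.univ_nonempty
      (fun pm : Fin n × Fin n =>
        (C i pm.1).toReal + (A pm.2 j).toReal - (C pm.2 pm.1).toReal) with hr
    set nu : Fin n → EReal :=
      fun m => if A m j = ⊤ then (⊥ : EReal) else (r : EReal) + esub 0 (A m j) with hnu
    refine ⟨nu, ?_, ?_⟩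
    · intro p
      by_cases hpbot : C i p = ⊥
      · rw [hpbot]; exact bot_le
      have hQtop : Qf p ≠ ⊤ := by
        intro h
        have := hyp' p
        rw [h, EReal.add_top_of_ne_bot hpbot, hA] at this
        exact lt_irrefl _ this
      set m := mw p with hm
      have hs : Qf p = esub (A m j) (C m p) := hmw p
      obtain ⟨hCmp, hAmj⟩ := esub_ne_top (hs ▸ hQtop)
      have hle : C i p ≤ nu m + C m p := by
        rcases etricho (A m j) with hb | hb | ⟨b, hb⟩
        · have h1 : nu m = ⊤ := by
            rw [hnu]
            simp only [hb, esub_bot_right]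
            rw [if_neg bot_ne_top, EReal.coe_add_top]
          rw [h1, EReal.top_add_of_ne_bot hCmp]
          exact le_top
        · exact absurd hb hAmj
        · have h1 : nu m = ((r - b : ℝ) : EReal) := by
            show (if A m j = ⊤ then (⊥ : EReal) else (r : EReal) + esub 0 (A m j))
              = ((r - b : ℝ) : EReal)
            rw [hb, if_neg (EReal.coe_ne_top b), ← EReal.coe_zero, esub_coe_coe,
              ← EReal.coe_add, EReal.coe_eq_coe_iff]
            ring
          rcases etricho (C m p) with hc | hc | ⟨c, hc⟩
          · exact absurd hc hCmp
          · rw [hc, EReal.add_top_of_ne_bot (by rw [h1]; exact EReal.coe_ne_bot _)]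
            exact le_top
          · -- both finite; here `C i p` cannot be `⊤`
            rcases etricho (C i p) with hp | hp | ⟨d, hp⟩
            · exact absurd hp hpbot
            · exfalso
              have hQbot : Qf p = ⊥ := by
                by_contra hQb
                have := hyp' p
                rw [hp, EReal.top_add_of_ne_bot hQb, hA] at this
                exact lt_irrefl _ this
              rw [hs, hb, hc, esub_coe_coe] at hQbot
              exact EReal.coe_ne_bot _ hQbot
            · rw [hp, h1, hc, ← EReal.coe_add]
              have hrge : d + b - c ≤ r := by
                rw [hr]
                have h6 := Finset.le_sup'
                  (fun pm : Fin n × Fin n =>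
                    (C i pm.1).toReal + (A pm.2 j).toReal - (C pm.2 pm.1).toReal)
                  (mem_univ (p, m))
                simp only at h6
                rw [hp, hb, hc, EReal.toReal_coe, EReal.toReal_coe, EReal.toReal_coe] at h6
                exact h6
              exact_mod_cast (by linarith : d ≤ r - b + c)
      exact hle.trans (Finset.le_sup' (fun m' => nu m' + C m' p) (mem_univ m))
    · show Finset.univ.sup' Finset.univ_nonempty (fun m => nu m + A m j) < A i j
      rw [hA, Finset.sup'_lt_iff]
      intro m _
      show (if A m j = ⊤ then (⊥ : EReal) else (r : EReal) + esub 0 (A m j)) + A m j < ⊤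
      by_cases hm : A m j = ⊤
      · rw [hm, if_pos rfl, EReal.bot_add]
        exact bot_lt_top
      · rcases etricho (A m j) with hb | hb | ⟨b, hb⟩
        · rw [hb, if_neg bot_ne_top, esub_bot_right, EReal.coe_add_top, EReal.add_bot]
          exact bot_lt_top
        · exact absurd hb hm
        · rw [hb, if_neg (EReal.coe_ne_top b), ← EReal.coe_zero, esub_coe_coe,
            ← EReal.coe_add, ← EReal.coe_add]
          exact EReal.coe_lt_top _
  · -- Case `A i j = a` finite
    set e : ℝ := Finset.univ.inf' Finset.univ_nonempty
      (fun p => if C i p + Qf p = ⊥ then 1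
        else (((a : ℝ) : EReal) - (C i p + Qf p)).toReal) with he
    have hepos : 0 < e := by
      rw [he, Finset.lt_inf'_iff]
      intro p _
      by_cases hb : C i p + Qf p = ⊥
      · rw [if_pos hb]; norm_num
      · rw [if_neg hb]
        have hlt := hyp' p
        rw [hA] at hlt
        rcases etricho (C i p + Qf p) with ht | ht | ⟨c, ht⟩
        · exact absurd ht hb
        · rw [ht] at hlt
          exact absurd hlt not_top_lt
        · rw [ht, ← EReal.coe_sub, EReal.toReal_coe]
          rw [ht, EReal.coe_lt_coe_iff] at hlt
          linarith
    set nu : Fin n → EReal :=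
      fun m => esub (A i j) (A m j) + ((-e : ℝ) : EReal) with hnu
    refine ⟨nu, ?_, ?_⟩
    · intro p
      by_cases hpbot : C i p = ⊥
      · rw [hpbot]; exact bot_le
      set m := mw p with hm
      have hs : Qf p = esub (A m j) (C m p) := hmw p
      have hle : C i p ≤ nu m + C m p := by
        rcases etricho (Qf p) with hq | hq | ⟨q, hq⟩
        · -- `Qf p = ⊥`
          obtain ⟨h1, h2, h3⟩ := esub_eq_bot (hs ▸ hq : esub (A m j) (C m p) = ⊥)
          have hnb : nu m ≠ ⊥ := by
            intro hE
            change esub (A i j) (A m j) + ((-e : ℝ) : EReal) = ⊥ at hE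
            rw [EReal.add_eq_bot_iff] at hE
            rcases hE with hE | hE
            · obtain ⟨_, _, hE3⟩ := esub_eq_bot hE
              rcases hE3 with hE3 | hE3
              · rw [hA] at hE3; exact EReal.coe_ne_bot _ hE3
              · exact h2 hE3
            · exact EReal.coe_ne_bot _ hE
          rcases h3 with h3 | h3
          · have h4 : nu m = ⊤ := by
              show esub (A i j) (A m j) + ((-e : ℝ) : EReal) = ⊤
              rw [h3, esub_bot_right, EReal.top_add_of_ne_bot (EReal.coe_ne_bot _)]
            rw [h4, EReal.top_add_of_ne_bot h1]
            exact le_top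
          · rw [h3, EReal.add_top_of_ne_bot hnb]
            exact le_top
        · -- `Qf p = ⊤` : impossible
          exfalso
          have := hyp' p
          rw [hq, EReal.add_top_of_ne_bot hpbot, hA] at this
          exact absurd this not_top_lt
        · -- `Qf p = q` finite
          obtain ⟨b, c, hb, hc, hbc⟩ := esub_eq_coe (hs ▸ hq : esub (A m j) (C m p) = (q : EReal))
          rcases etricho (C i p) with hp | hp | ⟨d, hp⟩
          · exact absurd hp hpbot
          · exfalso
            have := hyp' p
            rw [hp, hq, EReal.top_add_of_ne_bot (EReal.coe_ne_bot _), hA] at this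
            exact absurd this not_top_lt
          · have hda : d + q < a := by
              have := hyp' p
              rw [hp, hq, hA, ← EReal.coe_add, EReal.coe_lt_coe_iff] at this
              linarith
            have hee : e ≤ a - (d + q) := by
              have h5 := Finset.inf'_le
                (fun p => if C i p + Qf p = ⊥ then 1
                  else (((a : ℝ) : EReal) - (C i p + Qf p)).toReal) (mem_univ p)
              rw [← he, hp, hq, ← EReal.coe_add] at h5
              rw [if_neg (EReal.coe_ne_bot _), ← EReal.coe_sub, EReal.toReal_coe] at h5
              exact h5
            have h1 : nu m = ((a - b - e : ℝ) : EReal) := by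
              show esub (A i j) (A m j) + ((-e : ℝ) : EReal) = _
              rw [hA, hb, esub_coe_coe, ← EReal.coe_add, EReal.coe_eq_coe_iff]
              ring
            rw [hp, h1, hc, ← EReal.coe_add, EReal.coe_le_coe_iff]
            have : q = b - c := hbc
            linarith
      exact hle.trans (Finset.le_sup' (fun m' => nu m' + C m' p) (mem_univ m))
    · show Finset.univ.sup' Finset.univ_nonempty (fun m => nu m + A m j) < A i j
      rw [hA, Finset.sup'_lt_iff]
      intro m _
      have h1 : esub (A i j) (A m j) + A m j ≤ A i j := (esub_galois _ _ _).2 le_rfl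
      calc nu m + A m j
          = (esub (A i j) (A m j) + A m j) + ((-e : ℝ) : EReal) :=
            add_right_comm _ _ _
        _ ≤ A i j + ((-e : ℝ) : EReal) := add_le_add_left h1 _
        _ = ((a + -e : ℝ) : EReal) := by rw [hA]; exact (EReal.coe_add a (-e)).symm
        _ < (a : EReal) := by exact_mod_cast (by linarith : a + -e < a)

end ERealCase

end Stmt11Aux

/-- Characterisation of the `J`-order in `M_n(S)` for `S ∈ {FT, T̄}`
(formalised as `ℝ` and `EReal` with tropical operations). -/
theorem stmt11 (n : ℕ) [NeZero n] : JorderChar ℝ n ∧ JorderChar EReal n := by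
  constructor
  · exact Stmt11Aux.jorderChar _ Stmt11Aux.hsub_real Stmt11Aux.kl_real
  · exact Stmt11Aux.jorderChar _ Stmt11Aux.esub_galois Stmt11Aux.kl_ereal
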